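/- For Re(s) > 1, (π/2) ∫₀^∞ e^(-sx)(e^x − 2ψ(e^(-2x))) dx = (π/2)(1/(s−1) − 2ξ(s)/(s(s−1)) + π^(-s/2) ∑_{n≥1} n^(-s) Γ(s/2, π n²)). -/

import Mathlib

open MeasureTheory Real Complex

/-- Lower incomplete gamma function `γ(s, x)`. -/
noncomputable def lowerGamma (s : ℂ) (x : ℝ) : ℂ :=
  ∫ t in (0 : ℝ)..x, (t : ℂ) ^ (s - 1) * Complex.exp (-t)

/-- Upper incomplete gamma function `Γ(s, x)`. -/
noncomputable def upperGamma (s : ℂ) (x : ℝ) : ℂ :=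
  ∫ t in Set.Ioi x, (t : ℂ) ^ (s - 1) * Complex.exp (-t)

/-- Modified Jacobi theta function `ψ(x) = ∑_{n≥1} e^(-π n² x)`. -/
noncomputable def jpsi (x : ℝ) : ℝ := ∑' n : ℕ+, Real.exp (-π * n ^ 2 * x)

/-- The Riemann xi function `ξ(s) = (1/2) s (s-1) π^(-s/2) Γ(s/2) ζ(s)`. -/
noncomputable def xi (s : ℂ) : ℂ :=
  s * (s - 1) / 2 * ((π : ℂ) ^ (-s / 2) * Complex.Gamma (s / 2) * riemannZeta s)

section Aux

open Set Filter Topology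

private lemma img_lemma {c : ℝ} (hc : 0 < c) :
    (fun x : ℝ => c * Real.exp (-2 * x)) '' Set.Ioi 0 = Set.Ioo 0 c := by
  ext t
  constructor
  · rintro ⟨x, hx, rfl⟩
    simp only [Set.mem_Ioi] at hx
    have h1 : Real.exp (-2 * x) < 1 := Real.exp_lt_one_iff.2 (by linarith)
    have h2 : (0:ℝ) < Real.exp (-2 * x) := Real.exp_pos _
    exact ⟨mul_pos hc h2, by simpa using (mul_lt_of_lt_one_right hc h1)⟩
  · rintro ⟨h1, h2⟩
    refine ⟨-(1/2) * Real.log (t / c), ?_, ?_⟩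
    · have hlt : t / c < 1 := (div_lt_one hc).2 h2
      have h3 : Real.log (t / c) < 0 := Real.log_neg (div_pos h1 hc) hlt
      simp only [Set.mem_Ioi]
      linarith
    · have h4 : -2 * (-(1/2) * Real.log (t / c)) = Real.log (t / c) := by ring
      simp only [h4, Real.exp_log (div_pos h1 hc)]
      field_simp

private lemma subst_lemma {E : Type*} [NormedAddCommGroup E] [NormedSpace ℝ E] {c : ℝ}
    (hc : 0 < c) (F : ℝ → E) :
    ∫ t in Set.Ioo 0 c, F t
      = ∫ x in Set.Ioi (0:ℝ), (2 * c * Real.exp (-2 * x)) • F (c * Real.exp (-2 * x)) := by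
  have hderiv : ∀ x ∈ Set.Ioi (0:ℝ), HasDerivWithinAt (fun x => c * Real.exp (-2 * x))
      (-2 * c * Real.exp (-2 * x)) (Set.Ioi 0) x := by
    intro x _
    have h := (((hasDerivAt_id x).const_mul (-2 : ℝ)).exp.const_mul c).hasDerivWithinAt
      (s := Set.Ioi (0:ℝ))
    simp only [id] at h
    convert h using 1
    · rfl
    · rfl
    · ring
  have hinj : Set.InjOn (fun x : ℝ => c * Real.exp (-2 * x)) (Set.Ioi 0) := by
    intro a _ b _ h
    simp only [mul_right_inj' hc.ne'] at h
    have := Real.exp_eq_exp.mp h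
    linarith
  rw [← img_lemma hc,
    integral_image_eq_integral_abs_deriv_smul measurableSet_Ioi hderiv hinj F]
  refine setIntegral_congr_fun measurableSet_Ioi fun x _ => ?_
  have : |(-2) * c * Real.exp (-2 * x)| = 2 * c * Real.exp (-2 * x) := by
    rw [abs_of_nonpos (by nlinarith [Real.exp_pos (-2*x), hc] : (-2) * c * Real.exp (-2*x) ≤ 0)]
    ring
  rw [this]

private lemma ofReal_exp_cpow (y : ℝ) (w : ℂ) :
    ((Real.exp y : ℝ) : ℂ) ^ w = Complex.exp (y * w) := by
  rw [Complex.ofReal_exp, Complex.cpow_def_of_ne_zero (Complex.exp_ne_zero _),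
    Complex.log_exp (by simpa using Real.pi_pos) (by simpa using Real.pi_pos.le)]

private lemma key_complex {c : ℝ} (hc : 0 < c) (s : ℂ) :
    ∫ x in Set.Ioi (0:ℝ), Complex.exp (-s * x) * ((Real.exp (-(c * Real.exp (-2 * x))) : ℝ) : ℂ)
      = (c : ℂ) ^ (-s / 2) / 2 * ∫ t in Set.Ioo 0 c, (t : ℂ) ^ (s / 2 - 1) * Complex.exp (-t) := by
  have hc2 : ((c : ℂ)) ≠ 0 := Complex.ofReal_ne_zero.2 hc.ne'
  rw [subst_lemma hc]
  have hpt : ∀ x : ℝ,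
      (2 * c * Real.exp (-2 * x)) •
        ((((c * Real.exp (-2 * x) : ℝ)) : ℂ) ^ (s / 2 - 1)
          * Complex.exp (-((c * Real.exp (-2 * x) : ℝ) : ℂ)))
      = 2 * (c : ℂ) ^ (s / 2) *
        (Complex.exp (-s * x) * ((Real.exp (-(c * Real.exp (-2 * x))) : ℝ) : ℂ)) := by
    intro x
    have hu : (0:ℝ) < Real.exp (-2 * x) := Real.exp_pos _
    have e1 : (((c * Real.exp (-2 * x) : ℝ)) : ℂ) ^ (s / 2 - 1)
        = (c:ℂ)^(s/2-1) * Complex.exp (((-2*x : ℝ) : ℂ) * (s/2-1)) := by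
      rw [Complex.ofReal_mul, Complex.mul_cpow_ofReal_nonneg hc.le hu.le, ofReal_exp_cpow]
    have hA : (c:ℂ) * (c:ℂ)^(s/2-1) = (c:ℂ)^(s/2) := by
      nth_rewrite 1 [← Complex.cpow_one (c:ℂ)]
      rw [← Complex.cpow_add _ _ hc2]
      ring_nf
    rw [real_smul, e1]
    push_cast
    have hB : Complex.exp (-2*(x:ℂ)) * Complex.exp (-2*(x:ℂ)*(s/2-1))
        = Complex.exp (-s*(x:ℂ)) := by
      rw [← Complex.exp_add]; congr 1; ring
    linear_combination (2 * Complex.exp (-((c:ℂ) * Complex.exp (-2 * (x:ℂ))))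
        * Complex.exp (-2*(x:ℂ)) * Complex.exp (-2*(x:ℂ)*(s/2-1))) * hA
      + (2 * Complex.exp (-((c:ℂ) * Complex.exp (-2*(x:ℂ)))) * ((c:ℂ))^(s/2)) * hB
  rw [MeasureTheory.integral_congr_ae (Filter.Eventually.of_forall hpt)]
  rw [MeasureTheory.integral_const_mul, ← mul_assoc]
  have hone : (c : ℂ) ^ (-s / 2) / 2 * (2 * (c:ℂ) ^ (s / 2)) = 1 := by
    have h3 : (c : ℂ) ^ (-s / 2) * (c:ℂ) ^ (s / 2) = 1 := by
      rw [← Complex.cpow_add _ _ hc2, show -s/2 + s/2 = 0 by ring, Complex.cpow_zero]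
    calc (c : ℂ) ^ (-s / 2) / 2 * (2 * (c:ℂ) ^ (s / 2))
        = (c : ℂ) ^ (-s / 2) * (c:ℂ) ^ (s / 2) := by ring
      _ = 1 := h3
  rw [hone, one_mul]

private lemma key_real {c : ℝ} (hc : 0 < c) (r : ℝ) :
    ∫ x in Set.Ioi (0:ℝ), Real.exp (-r * x) * Real.exp (-(c * Real.exp (-2 * x)))
      = c ^ (-r / 2) / 2 * ∫ t in Set.Ioo 0 c, t ^ (r / 2 - 1) * Real.exp (-t) := by
  rw [subst_lemma hc]
  have hpt : ∀ x : ℝ,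
      (2 * c * Real.exp (-2 * x)) •
        ((c * Real.exp (-2 * x)) ^ (r / 2 - 1) * Real.exp (-(c * Real.exp (-2 * x))))
      = 2 * c ^ (r / 2) * (Real.exp (-r * x) * Real.exp (-(c * Real.exp (-2 * x)))) := by
    intro x
    have hu : (0:ℝ) < Real.exp (-2 * x) := Real.exp_pos _
    rw [smul_eq_mul, Real.mul_rpow hc.le hu.le, Real.rpow_def_of_pos hu, Real.log_exp]
    have h1 : c * c ^ (r / 2 - 1) = c ^ (r / 2) := by
      nth_rewrite 1 [← Real.rpow_one c]
      rw [← Real.rpow_add hc]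
      ring_nf
    have h2 : Real.exp (-2 * x) * Real.exp (-2 * x * (r / 2 - 1)) = Real.exp (-r * x) := by
      rw [← Real.exp_add]
      congr 1
      ring
    calc 2 * c * Real.exp (-2 * x)
          * (c ^ (r / 2 - 1) * Real.exp (-2 * x * (r / 2 - 1))
            * Real.exp (-(c * Real.exp (-2 * x))))
        = 2 * (c * c ^ (r / 2 - 1))
          * (Real.exp (-2 * x) * Real.exp (-2 * x * (r / 2 - 1)))
          * Real.exp (-(c * Real.exp (-2 * x))) := by ring
      _ = _ := by rw [h1, h2]; ring
  rw [MeasureTheory.integral_congr_ae (Filter.Eventually.of_forall hpt)]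
  rw [MeasureTheory.integral_const_mul, ← mul_assoc]
  have hone : c ^ (-r / 2) / 2 * (2 * c ^ (r / 2)) = 1 := by
    have h3 : c ^ (-r / 2) * c ^ (r / 2) = 1 := by
      rw [← Real.rpow_add hc, show -r/2 + r/2 = 0 by ring, Real.rpow_zero]
    calc c ^ (-r / 2) / 2 * (2 * c ^ (r / 2)) = c ^ (-r / 2) * c ^ (r / 2) := by ring
      _ = 1 := h3
  rw [hone, one_mul]

private lemma gamma_integrand_integrable {w : ℂ} (hw : 0 < w.re) :
    IntegrableOn (fun t : ℝ => (t : ℂ) ^ (w - 1) * Complex.exp (-t)) (Set.Ioi 0) := by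
  have h := Complex.GammaIntegral_convergent hw
  refine h.congr_fun (fun x hx => ?_) measurableSet_Ioi
  simp only [Complex.ofReal_exp]
  push_cast
  ring

private lemma gamma_as_integral {w : ℂ} (hw : 0 < w.re) :
    Complex.Gamma w = ∫ t in Set.Ioi (0:ℝ), (t : ℂ) ^ (w - 1) * Complex.exp (-t) := by
  rw [Complex.Gamma_eq_integral hw, Complex.GammaIntegral]
  refine setIntegral_congr_fun measurableSet_Ioi fun x _ => ?_
  rw [Complex.ofReal_exp]
  push_cast
  ring

private lemma gamma_split {w : ℂ} (hw : 0 < w.re) {X : ℝ} (hX : 0 < X) :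
    (∫ t in Set.Ioo 0 X, (t : ℂ) ^ (w - 1) * Complex.exp (-t))
      = Complex.Gamma w - upperGamma w X := by
  have hint := gamma_integrand_integrable hw
  have hunion := setIntegral_union (μ := volume)
    (f := fun t : ℝ => (t : ℂ) ^ (w - 1) * Complex.exp (-t))
    (Set.Ioc_disjoint_Ioi le_rfl) measurableSet_Ioi
    (hint.mono_set Set.Ioc_subset_Ioi_self) (hint.mono_set (Set.Ioi_subset_Ioi hX.le))
  rw [Set.Ioc_union_Ioi_eq_Ioi hX.le] at hunion
  rw [← integral_Ioc_eq_integral_Ioo]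
  rw [← gamma_as_integral hw] at hunion
  rw [upperGamma]
  rw [hunion]
  ring

private lemma zeta_pnat {s : ℂ} (hs : 1 < s.re) :
    ∑' n : ℕ+, (n : ℂ) ^ (-s) = riemannZeta s := by
  rw [zeta_eq_tsum_one_div_nat_add_one_cpow hs,
    ← Equiv.pnatEquivNat.symm.tsum_eq (fun n : ℕ+ => (n : ℂ) ^ (-s))]
  refine tsum_congr fun k => ?_
  have h1 : ((Equiv.pnatEquivNat.symm k : ℕ+) : ℂ) = (k : ℂ) + 1 := by
    have : ((Equiv.pnatEquivNat.symm k : ℕ+) : ℕ) = k + 1 := rfl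
    rw [show ((Equiv.pnatEquivNat.symm k : ℕ+) : ℂ) = (((Equiv.pnatEquivNat.symm k : ℕ+) : ℕ) : ℂ) from rfl, this]
    push_cast
    ring
  rw [h1, Complex.cpow_neg, one_div]

private lemma integral_cexp_Ioi {a : ℂ} (ha : 0 < a.re) :
    ∫ x in Set.Ioi (0:ℝ), Complex.exp (-a * x) = 1 / a := by
  have ha0 : a ≠ 0 := fun h => by simp [h] at ha
  have hInt : IntegrableOn (fun x : ℝ => Complex.exp (-a * x)) (Set.Ioi 0) := by
    refine (Integrable.mono' (exp_neg_integrableOn_Ioi 0 ha) ?_ ?_)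
    · exact (Complex.continuous_exp.comp (by fun_prop)).aestronglyMeasurable
    · filter_upwards with x
      rw [Complex.norm_exp]
      simp [Complex.mul_re]
  have h1 : Tendsto (fun b : ℝ => ∫ x in (0:ℝ)..b, Complex.exp (-a * x)) atTop
      (𝓝 (∫ x in Set.Ioi (0:ℝ), Complex.exp (-a * x))) :=
    intervalIntegral_tendsto_integral_Ioi 0 hInt tendsto_id
  have h2 : ∀ b : ℝ, ∫ x in (0:ℝ)..b, Complex.exp (-a * x)
      = (Complex.exp (-a * b) - 1) / (-a) := by
    intro b
    have := integral_exp_mul_complex (a := (0:ℝ)) (b := b) (c := -a) (neg_ne_zero.2 ha0)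
    simpa using this
  have h3 : Tendsto (fun b : ℝ => (Complex.exp (-a * b) - 1) / (-a)) atTop
      (𝓝 ((0 - 1) / (-a))) := by
    refine Tendsto.div_const (Tendsto.sub_const ?_ 1) (-a)
    rw [tendsto_zero_iff_norm_tendsto_zero]
    have heq : ∀ b : ℝ, ‖Complex.exp (-a * b)‖ = Real.exp (-(a.re * b)) := by
      intro b
      rw [Complex.norm_exp]
      congr 1
      simp [Complex.mul_re]
    simp only [heq]
    exact Real.tendsto_exp_neg_atTop_nhds_zero.comp
      (Tendsto.const_mul_atTop ha tendsto_id)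
  simp only [h2] at h1
  have := tendsto_nhds_unique h1 h3
  rw [this]
  rw [div_eq_div_iff (neg_ne_zero.2 ha0) ha0]
  ring

end Aux


open Set Filter Topology in
theorem stmt19 (s : ℂ) (hs : 1 < s.re) :
    π / 2 * ∫ x in Set.Ioi (0 : ℝ),
        Complex.exp (-s * x) * ((Real.exp x - 2 * jpsi (Real.exp (-2 * x)) : ℝ) : ℂ)
      = π / 2 * (1 / (s - 1) - 2 * xi s / (s * (s - 1))
          + (π : ℂ) ^ (-s / 2) * ∑' n : ℕ+, (n : ℂ) ^ (-s) * upperGamma (s / 2) (π * n ^ 2)) := by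
  have hσ0 : 0 < s.re := by linarith
  have hs0 : s ≠ 0 := fun h => by rw [h] at hs; simp at hs; linarith
  have hs1 : s - 1 ≠ 0 := fun h => by
    have : s = 1 := by linear_combination h
    rw [this] at hs; simp at hs
  have hre2 : (s / 2).re = s.re / 2 := by simp [Complex.div_ofNat_re]
  have hw : 0 < (s / 2).re := by rw [hre2]; linarith
  set σ := s.re with hσ
  -- the summand family
  set f : ℕ+ → ℝ → ℂ := fun n x =>
    Complex.exp (-s * x) * ((Real.exp (-π * (n : ℝ) ^ 2 * Real.exp (-2 * x)) : ℝ) : ℂ) with hf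
  have hnpos : ∀ n : ℕ+, (0:ℝ) < (n : ℝ) := fun n => by exact_mod_cast n.pos
  have hcpos : ∀ n : ℕ+, (0:ℝ) < π * (n : ℝ) ^ 2 := fun n => by
    have := hnpos n; positivity
  -- pointwise summability of the theta series
  have hsummand : ∀ x : ℝ,
      Summable (fun n : ℕ+ => Real.exp (-π * (n : ℝ) ^ 2 * Real.exp (-2 * x))) := by
    intro x
    have ht : (0:ℝ) < Real.exp (-2 * x) := Real.exp_pos _
    have hgeo : Summable (fun n : ℕ => (Real.exp (-π * Real.exp (-2 * x))) ^ n) :=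
      summable_geometric_of_lt_one (Real.exp_pos _).le
        (Real.exp_lt_one_iff.2 (by nlinarith [Real.pi_pos]))
    refine Summable.of_nonneg_of_le (fun n => (Real.exp_pos _).le) (fun n => ?_)
      (hgeo.subtype _)
    show Real.exp (-π * (n : ℝ) ^ 2 * Real.exp (-2 * x))
        ≤ (Real.exp (-π * Real.exp (-2 * x))) ^ (n : ℕ)
    rw [← Real.exp_nat_mul]
    apply Real.exp_le_exp.2
    have h1 : (1:ℝ) ≤ (n : ℝ) := by exact_mod_cast n.one_le
    have h2 : (n:ℝ) * 1 ≤ (n:ℝ) * (n:ℝ) := mul_le_mul_of_nonneg_left h1 (by linarith)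
    nlinarith [mul_pos Real.pi_pos ht]
  -- norms
  have hnorm : ∀ (n : ℕ+) (x : ℝ), ‖f n x‖
      = Real.exp (-σ * x) * Real.exp (-π * (n : ℝ) ^ 2 * Real.exp (-2 * x)) := by
    intro n x
    rw [hf]
    simp only [norm_mul, Complex.norm_exp, Complex.norm_real, Real.norm_eq_abs,
      _root_.abs_of_nonneg (Real.exp_pos _).le]
    congr 2
    simp [Complex.mul_re, hσ]
  -- integrability of each f n
  have hfi : ∀ n : ℕ+, IntegrableOn (f n) (Set.Ioi 0) := by
    intro n
    refine Integrable.mono' (exp_neg_integrableOn_Ioi 0 hσ0) ?_ ?_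
    · exact ((Complex.continuous_exp.comp (by fun_prop)).mul
        (Complex.continuous_ofReal.comp (by fun_prop))).aestronglyMeasurable
    · filter_upwards with x
      rw [hnorm n x]
      have h1 : Real.exp (-π * (n : ℝ) ^ 2 * Real.exp (-2 * x)) ≤ 1 := by
        apply Real.exp_le_one_iff.2
        have := hcpos n
        nlinarith [Real.exp_pos (-2 * x)]
      nlinarith [Real.exp_pos (-σ * x)]
  -- exact value of the norm integrals
  have hB0 : 0 < σ / 2 := by linarith
  have hBint : IntegrableOn (fun t : ℝ => t ^ (σ / 2 - 1) * Real.exp (-t)) (Set.Ioi 0) :=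
    (Real.GammaIntegral_convergent hB0).congr_fun
      (fun x _ => mul_comm _ _) measurableSet_Ioi
  set B : ℝ := ∫ t in Set.Ioi (0:ℝ), t ^ (σ / 2 - 1) * Real.exp (-t) with hBdef
  have hIooB : ∀ n : ℕ+,
      (∫ t in Set.Ioo 0 (π * (n : ℝ) ^ 2), t ^ (σ / 2 - 1) * Real.exp (-t)) ≤ B := by
    intro n
    refine setIntegral_mono_set hBint ?_ ?_
    · filter_upwards [self_mem_ae_restrict measurableSet_Ioi] with t ht
      have : (0:ℝ) < t := ht
      positivity
    · exact HasSubset.Subset.eventuallyLE Set.Ioo_subset_Ioi_self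
  have hIoonn : ∀ n : ℕ+,
      0 ≤ ∫ t in Set.Ioo 0 (π * (n : ℝ) ^ 2), t ^ (σ / 2 - 1) * Real.exp (-t) := by
    intro n
    refine setIntegral_nonneg measurableSet_Ioo fun t ht => ?_
    have := ht.1
    positivity
  have hnormint : ∀ n : ℕ+, ∫ x in Set.Ioi (0:ℝ), ‖f n x‖
      = (π * (n : ℝ) ^ 2) ^ (-σ / 2) / 2
        * ∫ t in Set.Ioo 0 (π * (n : ℝ) ^ 2), t ^ (σ / 2 - 1) * Real.exp (-t) := by
    intro n
    have := key_real (hcpos n) σ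
    rw [← this]
    refine setIntegral_congr_fun measurableSet_Ioi fun x _ => ?_
    rw [hnorm n x]
    congr 2
    ring
  -- rpow / cpow splitting of the constant
  have hrsplit : ∀ n : ℕ+, (π * (n : ℝ) ^ 2) ^ (-σ / 2) = π ^ (-σ / 2) * (n : ℝ) ^ (-σ) := by
    intro n
    rw [Real.mul_rpow Real.pi_pos.le (sq_nonneg _)]
    congr 1
    rw [← Real.rpow_natCast (n : ℝ) 2, ← Real.rpow_mul (hnpos n).le]
    congr 1
    push_cast
    ring
  have hsum_rpow : Summable (fun n : ℕ+ => ((n:ℕ) : ℝ) ^ (-σ)) :=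
    (Real.summable_nat_rpow.mpr (by linarith)).subtype _
  have hsumnorm : Summable (fun n : ℕ+ => ∫ x in Set.Ioi (0:ℝ), ‖f n x‖) := by
    refine Summable.of_nonneg_of_le
      (fun n => integral_nonneg fun x => norm_nonneg _) (fun n => ?_)
      (hsum_rpow.mul_left (π ^ (-σ / 2) / 2 * B))
    rw [hnormint n, hrsplit n]
    have hco : (0:ℝ) ≤ π ^ (-σ / 2) * (n:ℝ) ^ (-σ) / 2 := by
      have := hnpos n; positivity
    calc π ^ (-σ / 2) * (n:ℝ) ^ (-σ) / 2
          * ∫ t in Set.Ioo 0 (π * (n : ℝ) ^ 2), t ^ (σ / 2 - 1) * Real.exp (-t)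
        ≤ π ^ (-σ / 2) * (n:ℝ) ^ (-σ) / 2 * B := mul_le_mul_of_nonneg_left (hIooB n) hco
      _ = π ^ (-σ / 2) / 2 * B * ((n:ℕ) : ℝ) ^ (-σ) := by ring
  -- value of each complex integral
  have hval : ∀ n : ℕ+, (∫ x in Set.Ioi (0:ℝ), f n x)
      = (π:ℂ) ^ (-s/2) * (n:ℂ) ^ (-s) / 2
        * (Complex.Gamma (s/2) - upperGamma (s/2) (π * (n:ℝ)^2)) := by
    intro n
    have hpt : ∀ x : ℝ, f n x = Complex.exp (-s * x)
        * ((Real.exp (-(π * (n:ℝ)^2 * Real.exp (-2 * x))) : ℝ) : ℂ) := by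
      intro x
      simp only [hf]
      rw [show -π * (n:ℝ)^2 * Real.exp (-2*x) = -(π * (n:ℝ)^2 * Real.exp (-2*x)) by ring]
    rw [MeasureTheory.integral_congr_ae (Filter.Eventually.of_forall hpt),
      key_complex (hcpos n) s]
    have h2 : (s/2*2 - 2)/2 = s/2 - 1 := by ring
    rw [gamma_split hw (hcpos n)]
    congr 1
    -- ((π * n² : ℝ) : ℂ) ^ (-s/2) / 2 = π^(-s/2) * n^(-s) / 2
    rw [Complex.ofReal_mul, Complex.mul_cpow_ofReal_nonneg Real.pi_pos.le (sq_nonneg _)]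
    rw [show ((n:ℝ)^2) = ((n:ℝ)) ^ ((2:ℕ):ℝ) from (Real.rpow_natCast _ 2).symm]
    rw [← Complex.cpow_mul_ofReal_nonneg (hnpos n).le ((2:ℕ):ℝ) (-s/2)]
    rw [show (((2:ℕ):ℝ):ℂ) * (-s/2) = -s by push_cast; ring]
    rw [show (((n:ℝ)):ℂ) = (n:ℂ) by push_cast; ring]
  -- the full theta-type integrand
  set F : ℝ → ℂ := fun x =>
    Complex.exp (-s * x) * ((jpsi (Real.exp (-2 * x)) : ℝ) : ℂ) with hFdef
  have hFrw : ∀ x : ℝ, (∑' n : ℕ+, f n x) = F x := by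
    intro x
    simp only [hf, hFdef]
    rw [tsum_mul_left, jpsi, Complex.ofReal_tsum]
  -- measurability of jpsi ∘ exp
  have hjm : Measurable (fun x : ℝ => jpsi (Real.exp (-2 * x))) := by
    apply measurable_of_tendsto_metrizable
      (f := fun N x => ∑ k ∈ Finset.range N,
        Real.exp (-π * ((Equiv.pnatEquivNat.symm k : ℕ+) : ℝ) ^ 2 * Real.exp (-2 * x)))
    · intro N
      exact Finset.measurable_sum _ (fun k _ => by fun_prop)
    · rw [tendsto_pi_nhds]
      intro x
      have h1 : HasSum (fun n : ℕ+ => Real.exp (-π * (n : ℝ) ^ 2 * Real.exp (-2 * x)))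
          (jpsi (Real.exp (-2 * x))) := by
        rw [jpsi]
        exact (hsummand x).hasSum
      have h2 := (Equiv.pnatEquivNat.symm.hasSum_iff.mpr h1).tendsto_sum_nat
      exact h2
  have hFmeas : AEStronglyMeasurable F (volume.restrict (Set.Ioi 0)) := by
    apply Measurable.aestronglyMeasurable
    exact ((Complex.continuous_exp.comp (by fun_prop)).measurable).mul
      (Complex.measurable_ofReal.comp hjm)
  -- summability of norms, pointwise
  have hsumnormx : ∀ x : ℝ, Summable (fun n : ℕ+ => ‖f n x‖) := by
    intro x
    simp only [hnorm]
    exact (hsummand x).mul_left _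
  have hFnorm : ∀ x : ℝ, ‖F x‖ = ∑' n : ℕ+, ‖f n x‖ := by
    intro x
    have hjnn : 0 ≤ jpsi (Real.exp (-2 * x)) := by
      rw [jpsi]
      exact tsum_nonneg fun n => (Real.exp_pos _).le
    simp only [hFdef, hnorm]
    rw [norm_mul, Complex.norm_exp,
      Complex.norm_real, Real.norm_eq_abs, _root_.abs_of_nonneg hjnn,
      tsum_mul_left, jpsi]
    congr 1
    simp [Complex.mul_re, hσ]
  -- integrability of F
  have hFint : IntegrableOn F (Set.Ioi 0) := by
    refine ⟨hFmeas, ?_⟩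
    rw [hasFiniteIntegral_iff_norm]
    have h1 : ∀ x : ℝ, ENNReal.ofReal ‖F x‖ = ∑' n : ℕ+, ENNReal.ofReal ‖f n x‖ := by
      intro x
      rw [hFnorm x, ENNReal.ofReal_tsum_of_nonneg (fun n => norm_nonneg _) (hsumnormx x)]
    simp only [h1]
    have hfc : ∀ n : ℕ+, Continuous (f n) := fun n => by
      simp only [hf]
      exact (Complex.continuous_exp.comp (by fun_prop)).mul
        (Complex.continuous_ofReal.comp (by fun_prop))
    rw [lintegral_tsum fun n => ((hfc n).norm.measurable.ennreal_ofReal).aemeasurable]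
    have h2 : ∀ n : ℕ+, ∫⁻ x in Set.Ioi (0:ℝ), ENNReal.ofReal ‖f n x‖
        = ENNReal.ofReal (∫ x in Set.Ioi (0:ℝ), ‖f n x‖) := fun n =>
      (ofReal_integral_eq_lintegral_ofReal (hfi n).norm
        (Filter.Eventually.of_forall fun x => norm_nonneg _)).symm
    simp only [h2]
    rw [← ENNReal.ofReal_tsum_of_nonneg
      (fun n => integral_nonneg fun x => norm_nonneg _) hsumnorm]
    exact ENNReal.ofReal_lt_top
  -- swap sum and integral
  have hswap : ∫ x in Set.Ioi (0:ℝ), F x = ∑' n : ℕ+, ∫ x in Set.Ioi (0:ℝ), f n x := by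
    rw [MeasureTheory.integral_congr_ae
      (Filter.Eventually.of_forall fun x => (hFrw x).symm)]
    exact (integral_tsum_of_summable_integral_norm hfi hsumnorm).symm
  -- integrability and value of the exponential part
  have hre1 : (s - 1).re = σ - 1 := by rw [Complex.sub_re, Complex.one_re, ← hσ]
  have hA : IntegrableOn (fun x : ℝ => Complex.exp (-(s-1) * x)) (Set.Ioi 0) := by
    refine Integrable.mono' (exp_neg_integrableOn_Ioi (b := σ - 1) 0 (by linarith)) ?_ ?_
    · exact (Complex.continuous_exp.comp (by fun_prop)).aestronglyMeasurable
    · filter_upwards with x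
      rw [Complex.norm_exp]
      have h9 : (-(s-1) * (x:ℂ)).re = -(σ-1) * x := by
        rw [hσ]
        simp [Complex.mul_re, Complex.sub_re]
      rw [h9]
  -- rewrite the integrand
  have hpt2 : ∀ x : ℝ,
      Complex.exp (-s * x) * ((Real.exp x - 2 * jpsi (Real.exp (-2 * x)) : ℝ) : ℂ)
        = Complex.exp (-(s-1) * x) - 2 * F x := by
    intro x
    simp only [hFdef]
    push_cast
    rw [mul_sub]
    congr 1
    · rw [← Complex.exp_add]
      congr 1
      push_cast
      ring
    · ring
  have hmain : (∫ x in Set.Ioi (0:ℝ),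
      Complex.exp (-s * x) * ((Real.exp x - 2 * jpsi (Real.exp (-2 * x)) : ℝ) : ℂ))
      = 1 / (s - 1) - 2 * ∑' n : ℕ+, ∫ x in Set.Ioi (0:ℝ), f n x := by
    rw [MeasureTheory.integral_congr_ae (Filter.Eventually.of_forall hpt2)]
    rw [MeasureTheory.integral_sub hA ((hFint.const_mul 2))]
    rw [MeasureTheory.integral_const_mul, hswap,
      integral_cexp_Ioi (by rw [hre1]; linarith : 0 < (s-1).re)]
  -- evaluate the tsum
  set P : ℂ := (π:ℂ) ^ (-s/2) with hP
  set U : ℕ+ → ℂ := fun n => upperGamma (s/2) (π * (n:ℝ)^2) with hU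
  have hsumz : Summable (fun n : ℕ+ => (n:ℂ) ^ (-s)) := by
    refine Summable.of_norm_bounded (g := fun n : ℕ+ => ((n:ℕ):ℝ) ^ (-σ)) hsum_rpow fun n => ?_
    rw [show ((n:ℕ+):ℂ) = (((n:ℝ)):ℂ) by push_cast; ring, 
      Complex.norm_cpow_eq_rpow_re_of_pos (hnpos n)]
    simp [hσ]
  have hUb : ∀ n : ℕ+, ‖U n‖ ≤ B := by
    intro n
    rw [hU]
    simp only [upperGamma]
    calc ‖∫ t in Set.Ioi (π * (n:ℝ)^2), (t:ℂ) ^ (s/2 - 1) * Complex.exp (-t)‖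
        ≤ ∫ t in Set.Ioi (π * (n:ℝ)^2), ‖(t:ℂ) ^ (s/2 - 1) * Complex.exp (-t)‖ :=
          norm_integral_le_integral_norm _
      _ = ∫ t in Set.Ioi (π * (n:ℝ)^2), t ^ (σ/2 - 1) * Real.exp (-t) := by
          refine setIntegral_congr_fun measurableSet_Ioi fun t ht => ?_
          have ht0 : (0:ℝ) < t := lt_trans (hcpos n) ht
          rw [norm_mul, Complex.norm_cpow_eq_rpow_re_of_pos ht0,
            Complex.norm_exp]
          norm_num [Complex.sub_re, hre2, Complex.one_re]
      _ ≤ B := setIntegral_mono_set hBint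
          (by
            filter_upwards [self_mem_ae_restrict measurableSet_Ioi] with t ht
            have : (0:ℝ) < t := ht
            positivity)
          (HasSubset.Subset.eventuallyLE (Set.Ioi_subset_Ioi (hcpos n).le))
  have hsumU : Summable (fun n : ℕ+ => (n:ℂ) ^ (-s) * U n) := by
    refine Summable.of_norm_bounded (g := fun n : ℕ+ => ((n:ℕ):ℝ) ^ (-σ) * B)
      (hsum_rpow.mul_right B) fun n => ?_
    rw [norm_mul]
    have h1 : ‖(n:ℂ) ^ (-s)‖ = ((n:ℕ):ℝ) ^ (-σ) := by
      rw [show ((n:ℕ+):ℂ) = (((n:ℝ)):ℂ) by push_cast; ring, 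
        Complex.norm_cpow_eq_rpow_re_of_pos (hnpos n)]
      simp [hσ]
    rw [h1]
    exact mul_le_mul_of_nonneg_left (hUb n) (Real.rpow_nonneg (hnpos n).le _)
  have htsum : ∑' n : ℕ+, ∫ x in Set.Ioi (0:ℝ), f n x
      = P * Complex.Gamma (s/2) / 2 * riemannZeta s - P / 2 * ∑' n : ℕ+, (n:ℂ)^(-s) * U n := by
    calc ∑' n : ℕ+, ∫ x in Set.Ioi (0:ℝ), f n x
        = ∑' n : ℕ+, (P * Complex.Gamma (s/2) / 2 * (n:ℂ)^(-s)
            - P / 2 * ((n:ℂ)^(-s) * U n)) := by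
          refine tsum_congr fun n => ?_
          rw [hval n]
          ring
      _ = P * Complex.Gamma (s/2) / 2 * ∑' n : ℕ+, (n:ℂ)^(-s)
            - P / 2 * ∑' n : ℕ+, ((n:ℂ)^(-s) * U n) := by
          rw [Summable.tsum_sub (hsumz.mul_left _) (hsumU.mul_left _), tsum_mul_left, tsum_mul_left]
      _ = _ := by rw [zeta_pnat hs]
  -- final algebra
  rw [hmain, htsum]
  have hxi : 2 * xi s / (s * (s - 1)) = P * Complex.Gamma (s/2) * riemannZeta s := by
    rw [xi, hP]
    rw [div_eq_iff (mul_ne_zero hs0 hs1)]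
    ring
  rw [hxi]
  have hUcongr : (∑' n : ℕ+, (n:ℂ)^(-s) * upperGamma (s/2) (π * (n:ℝ)^2))
      = ∑' n : ℕ+, (n:ℂ)^(-s) * U n := by simp only [hU]
  rw [hUcongr]
  ring
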